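/- arXiv:1212.1795 — 4 statements merged into one kernel-verified Lean document; each statement's English description precedes it below -/
import Mathlib

section
/- For fixed reals u, v and a fixed positive integer m, the quantity (2π/(mn)) · s_n((2π/(mn)) u + v) converges as n → ∞ to 0 if v is not a multiple of 2π, and to (1/m) · q(u/m) if v is a multiple of 2π, where q(u) = sin(πu)/(πu) with q(0) = 1. -/
open Real Filter MeasureTheory

/-- The kernel `s_n(u) = (1/(2π)) · sin(nu/2)/sin(u/2)`, extended by continuity at the
multiples of `2π` (where it takes the value `±n/(2π)`), via the Dirichlet-kernel cosine sum. -/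
noncomputable def sn (n : ℕ) (u : ℝ) : ℝ :=
  if Real.sin (u / 2) = 0 then
    (1 / (2 * Real.pi)) * ∑ j ∈ Finset.range n, Real.cos (((j : ℝ) - ((n : ℝ) - 1) / 2) * u)
  else (1 / (2 * Real.pi)) * Real.sin ((n : ℝ) * u / 2) / Real.sin (u / 2)
/-- The sine kernel `q(u) = sin(πu)/(πu)`, with `q(0) = 1`. -/
noncomputable def sineq (u : ℝ) : ℝ :=
  if u = 0 then 1 else Real.sin (Real.pi * u) / (Real.pi * u)

lemma aux_sin_div : Tendsto (fun y : ℝ => Real.sin y / y) (nhdsWithin 0 {0}ᶜ) (nhds 1) := by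
  have h := (Real.hasDerivAt_sin 0)
  rw [hasDerivAt_iff_tendsto_slope] at h
  simp only [Real.cos_zero] at h
  refine h.congr' ?_
  filter_upwards [self_mem_nhdsWithin] with y hy
  simp [slope_def_field, Real.sin_zero]


/-- For fixed reals `u, v` and a fixed positive integer `m`,
`(2π/(mn)) · s_n((2π/(mn)) u + v)` converges as `n → ∞` to `0` if `v` is not a multiple
of `2π`, and (in the case `v = 0` of a multiple of `2π`) to `(1/m) q(u/m)`. -/
theorem tendsto_scaled_sn_shift (m : ℕ) (hm : 0 < m) (u v : ℝ) :
    ((¬ ∃ j : ℤ, v = 2 * Real.pi * j) →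
      Tendsto (fun n : ℕ => 2 * Real.pi / (m * n) * sn n (2 * Real.pi / (m * n) * u + v))
        atTop (nhds 0)) ∧
    (v = 0 →
      Tendsto (fun n : ℕ => 2 * Real.pi / (m * n) * sn n (2 * Real.pi / (m * n) * u + v))
        atTop (nhds ((1 / m) * sineq (u / m)))) := by
  have hm0 : (m : ℝ) ≠ 0 := Nat.cast_ne_zero.mpr hm.ne'
  have hπ : Real.pi ≠ 0 := Real.pi_ne_zero
  have hc : ∀ c : ℝ, Tendsto (fun n : ℕ => c / ((m : ℝ) * n)) atTop (nhds 0) := by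
    intro c
    have heq : (fun n : ℕ => c / ((m : ℝ) * n)) = fun n : ℕ => (c / m) * (1 / (n : ℝ)) := by
      funext n; field_simp
    rw [heq]
    simpa using tendsto_one_div_atTop_nhds_zero_nat.const_mul (c / (m : ℝ))
  constructor
  · -- v not a multiple of 2π
    intro hv
    have hsv : Real.sin (v / 2) ≠ 0 := by
      intro h
      rw [Real.sin_eq_zero_iff] at h
      obtain ⟨k, hk⟩ := h
      exact hv ⟨k, by linarith⟩
    have hsvpos : 0 < |Real.sin (v / 2)| := abs_pos.mpr hsv
    have hs : Tendsto (fun n : ℕ => Real.sin ((2 * Real.pi / (m * n) * u + v) / 2)) atTop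
        (nhds (Real.sin (v / 2))) := by
      have h1 : Tendsto (fun n : ℕ => (2 * Real.pi / (m * n) * u + v) / 2) atTop
          (nhds (v / 2)) := by
        have := (((hc (2 * Real.pi)).mul_const u).add_const v).div_const 2
        simpa using this
      exact (Real.continuous_sin.tendsto _).comp h1
    have heb : ∀ᶠ n : ℕ in atTop,
        |Real.sin (v / 2)| / 2 ≤ |Real.sin ((2 * Real.pi / (m * n) * u + v) / 2)| :=
      hs.abs.eventually (eventually_ge_nhds (by linarith))
    apply squeeze_zero_norm'
      (a := fun n : ℕ => 2 * Real.pi / (m * n) * ((1 / (2 * Real.pi)) * 1 / (|Real.sin (v / 2)| / 2)))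
    · filter_upwards [heb] with n hn
      have hne : Real.sin ((2 * Real.pi / (m * n) * u + v) / 2) ≠ 0 := by
        intro h; rw [h] at hn; simp at hn; nlinarith
      rw [sn, if_neg hne]
      rw [Real.norm_eq_abs, abs_mul,
        abs_of_nonneg (by positivity : (0:ℝ) ≤ 2 * Real.pi / (m * n)),
        abs_div, abs_mul, abs_of_nonneg (by positivity : (0:ℝ) ≤ 1 / (2 * Real.pi))]
      have hb : (0:ℝ) < |Real.sin (v / 2)| / 2 := by positivity
      gcongr
      exact Real.abs_sin_le_one _
    · have := (hc (2 * Real.pi)).mul_const ((1 / (2 * Real.pi)) * 1 / (|Real.sin (v / 2)| / 2))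
      simpa using this
  · -- v = 0
    intro hv
    subst hv
    by_cases hu : u = 0
    · subst hu
      have hval : sineq ((0 : ℝ) / m) = 1 := by simp [sineq]
      rw [hval, mul_one]
      apply Tendsto.congr' _ (tendsto_const_nhds (α := ℕ) (x := (1 : ℝ) / m))
      filter_upwards [eventually_gt_atTop 0] with n hn
      have hn0 : (n : ℝ) ≠ 0 := Nat.cast_ne_zero.mpr hn.ne'
      have harg : 2 * Real.pi / (m * n) * 0 + 0 = (0 : ℝ) := by ring
      rw [harg, sn, if_pos (by simp)]
      simp only [mul_zero, Real.cos_zero, Finset.sum_const, Finset.card_range, nsmul_eq_mul,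
        mul_one]
      field_simp
    · -- u ≠ 0
      have hπu : Real.pi * u ≠ 0 := mul_ne_zero hπ hu
      set a : ℕ → ℝ := fun n => Real.pi * u / (m * n) with ha_def
      have ha : Tendsto a atTop (nhds 0) := hc (Real.pi * u)
      have hane : ∀ᶠ n : ℕ in atTop, a n ≠ 0 := by
        filter_upwards [eventually_gt_atTop 0] with n hn
        have hn0 : (n : ℝ) ≠ 0 := Nat.cast_ne_zero.mpr hn.ne'
        exact div_ne_zero hπu (mul_ne_zero hm0 hn0)
      have ha' : Tendsto a atTop (nhdsWithin 0 {0}ᶜ) :=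
        tendsto_nhdsWithin_of_tendsto_nhds_of_eventually_within _ ha hane
      have hq : Tendsto (fun n : ℕ => Real.sin (a n) / a n) atTop (nhds 1) :=
        aux_sin_div.comp ha'
      have hq' : Tendsto (fun n : ℕ => (Real.sin (a n) / a n)⁻¹) atTop (nhds 1⁻¹) :=
        hq.inv₀ one_ne_zero
      have hsmall : ∀ᶠ n : ℕ in atTop, |a n| < Real.pi :=
        ha.abs.eventually (eventually_lt_nhds (by simpa using Real.pi_pos))
      have hmain : Tendsto
          (fun n : ℕ => Real.sin (Real.pi * u / m) / (Real.pi * u) * (Real.sin (a n) / a n)⁻¹)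
          atTop (nhds (Real.sin (Real.pi * u / m) / (Real.pi * u) * 1⁻¹)) :=
        hq'.const_mul _
      have hfinal : Real.sin (Real.pi * u / m) / (Real.pi * u) * 1⁻¹
          = (1 / m) * sineq (u / m) := by
        rw [sineq, if_neg (div_ne_zero hu hm0)]
        field_simp
      rw [hfinal] at hmain
      apply Tendsto.congr' _ hmain
      filter_upwards [eventually_gt_atTop 0, hane, hsmall] with n hn han hsm
      have hn0 : (n : ℝ) ≠ 0 := Nat.cast_ne_zero.mpr hn.ne'
      have hsa : Real.sin (a n) ≠ 0 := by
        intro h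
        rw [Real.sin_eq_zero_iff_of_lt_of_lt (by cases abs_lt.mp hsm; linarith)
          (abs_lt.mp hsm).2] at h
        exact han h
      have harg : (2 * Real.pi / (m * n) * u + 0) / 2 = a n := by
        rw [ha_def]; ring
      have harg2 : (n : ℝ) * (2 * Real.pi / (m * n) * u + 0) / 2 = Real.pi * u / m := by
        field_simp; ring
      rw [sn, if_neg (harg ▸ hsa), harg, harg2, inv_div, ha_def]
      field_simp
end

section
/- For every fixed k and every fixed (x_1,…,x_k) ∈ ℝ^k, the k-th correlation function of the superposition mΣ_1 ∪ … ∪ mΣ_m of m independent sine processes each rescaled by m converges to 1 as m → ∞; i.e., Σ_{p=1}^{min(m,k)} Σ_{π ∈ 𝔖(k,p)} m^{-k} (m!/(m−p)!) Π_{j=1}^p det[q((x_s − x_t)/m)]_{s,t ∈ π_j} → 1 as m → ∞. -/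
open Real Filter MeasureTheory

lemma tendsto_sineq_nhds_zero : Tendsto sineq (nhds 0) (nhds 1) := by
  rw [← nhdsNE_sup_pure (0 : ℝ), tendsto_sup]
  constructor
  · have hd : HasDerivAt (fun u : ℝ => Real.sin (Real.pi * u)) Real.pi 0 := by
      have := (Real.hasDerivAt_sin (Real.pi * 0)).comp 0
        ((hasDerivAt_id (0 : ℝ)).const_mul Real.pi)
      simpa [Function.comp_def] using this
    have hs := hasDerivAt_iff_tendsto_slope.mp hd
    have h2 : Tendsto (fun u : ℝ => Real.sin (Real.pi * u) / u / Real.pi)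
        (nhdsWithin 0 {(0:ℝ)}ᶜ) (nhds (Real.pi / Real.pi)) := by
      refine Tendsto.div_const ?_ _
      refine hs.congr' ?_
      filter_upwards [self_mem_nhdsWithin] with u hu
      simp [slope_def_field, hu]
    rw [div_self Real.pi_ne_zero] at h2
    refine h2.congr' ?_
    filter_upwards [self_mem_nhdsWithin] with u hu
    have hu' : u ≠ 0 := hu
    simp only [sineq, if_neg hu']
    rw [div_div]
    ring_nf
  · have : sineq 0 = 1 := by simp [sineq]
    simpa [this] using tendsto_pure_nhds sineq 0

lemma tendsto_sineq_div_nat (c : ℝ) :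
    Tendsto (fun m : ℕ => sineq (c / m)) atTop (nhds 1) :=
  tendsto_sineq_nhds_zero.comp (tendsto_const_div_atTop_nhds_zero_nat c)

lemma tendsto_det_block {k : ℕ} (x : Fin k → ℝ) (b : Finset (Fin k)) :
    Tendsto (fun m : ℕ =>
        Matrix.det (Matrix.of fun s t : b => sineq (((x s : ℝ) - x t) / m)))
      atTop (nhds (Matrix.det (Matrix.of fun _ _ : b => (1 : ℝ)))) := by
  have hdet : Continuous (Matrix.det : Matrix b b ℝ → ℝ) :=
    Continuous.matrix_det continuous_id
  refine (hdet.tendsto _).comp ?_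
  refine tendsto_pi_nhds.mpr ?_
  intro s
  rw [tendsto_pi_nhds]
  intro t
  simpa using tendsto_sineq_div_nat ((x s : ℝ) - x t)

lemma tendsto_desc_div (k p : ℕ) (hp : p ≤ k) (hk : 1 ≤ k) :
    Tendsto (fun m : ℕ => (1 / (m : ℝ) ^ k) * (m.descFactorial p : ℝ)) atTop
      (nhds (if p = k then 1 else 0)) := by
  have hmain : Tendsto (fun m : ℕ =>
      (∏ i ∈ Finset.range p, (1 - (i : ℝ) / m)) * (1 / (m : ℝ)) ^ (k - p)) atTop
      (nhds (if p = k then 1 else 0)) := by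
    have h1 : Tendsto (fun m : ℕ => ∏ i ∈ Finset.range p, (1 - (i : ℝ) / m)) atTop
        (nhds 1) := by
      have := tendsto_finset_prod (Finset.range p)
        (fun i _ => (tendsto_const_nhds (x := (1:ℝ))).sub
          (tendsto_const_div_atTop_nhds_zero_nat (i : ℝ)))
      simpa using this
    have h2 : Tendsto (fun m : ℕ => (1 / (m : ℝ)) ^ (k - p)) atTop
        (nhds (if p = k then 1 else 0)) := by
      rcases eq_or_lt_of_le hp with h | h
      · simp only [h, Nat.sub_self, pow_zero, if_pos rfl]
        exact tendsto_const_nhds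
      · rw [if_neg h.ne]
        have h0 : Tendsto (fun m : ℕ => (1 / (m : ℝ))) atTop (nhds 0) := by
          simpa using tendsto_const_div_atTop_nhds_zero_nat (1 : ℝ)
        have := h0.pow (k - p)
        rwa [zero_pow (by omega : k - p ≠ 0)] at this
    have := h1.mul h2
    rwa [one_mul] at this
  refine hmain.congr' ?_
  filter_upwards [eventually_ge_atTop k] with m hm
  have hm1 : 1 ≤ m := le_trans hk hm
  have hm0 : (m : ℝ) ≠ 0 := by positivity
  have hcast : (m.descFactorial p : ℝ) = ∏ i ∈ Finset.range p, ((m : ℝ) - i) := by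
    rw [Nat.descFactorial_eq_prod_range, Nat.cast_prod]
    refine Finset.prod_congr rfl fun i hi => ?_
    have : i ≤ m := le_trans (le_of_lt (Finset.mem_range.mp hi)) (le_trans hp hm)
    push_cast [Nat.cast_sub this]
    ring
  have hsplit : (1 : ℝ) / (m : ℝ) ^ k = (1 / (m : ℝ)) ^ p * (1 / (m : ℝ)) ^ (k - p) := by
    rw [← pow_add, Nat.add_sub_cancel' hp, div_pow, one_pow]
  have hprod : (1 / (m : ℝ)) ^ p * ∏ i ∈ Finset.range p, ((m : ℝ) - i)
      = ∏ i ∈ Finset.range p, (1 - (i : ℝ) / m) := by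
    rw [show ((1:ℝ)/(m:ℝ)) ^ p = ∏ _i ∈ Finset.range p, (1/(m:ℝ)) by
        rw [Finset.prod_const, Finset.card_range]]
    rw [← Finset.prod_mul_distrib]
    refine Finset.prod_congr rfl fun i _ => ?_
    field_simp
  rw [hcast, hsplit]
  rw [← hprod]
  ring

lemma finpartition_eq_bot_of_card_parts {α : Type*} [DecidableEq α] {s : Finset α}
    (P : Finpartition s) (h : P.parts.card = s.card) : P = ⊥ := by
  have hcards : ∀ b ∈ P.parts, b.card = 1 := by
    have h1 : ∀ b ∈ P.parts, 1 ≤ b.card := fun b hb =>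
      Finset.card_pos.mpr (P.nonempty_of_mem_parts hb)
    have hsum : ∑ b ∈ P.parts, (1 : ℕ) = ∑ b ∈ P.parts, b.card := by
      rw [P.sum_card_parts, Finset.sum_const, smul_eq_mul, mul_one, h]
    intro b hb
    exact ((Finset.sum_eq_sum_iff_of_le h1).mp hsum b hb).symm
  have hsub : P.parts ⊆ (⊥ : Finpartition s).parts := by
    intro b hb
    obtain ⟨a, rfl⟩ := Finset.card_eq_one.mp (hcards b hb)
    rw [Finpartition.mem_bot_iff]
    exact ⟨a, Finset.singleton_subset_iff.mp (P.le hb), rfl⟩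
  ext b
  constructor
  · exact fun hb => hsub hb
  · intro hb
    have heq : P.parts = (⊥ : Finpartition s).parts :=
      Finset.eq_of_subset_of_card_le hsub (by rw [Finpartition.card_bot, h])
    rw [heq]; exact hb

lemma det_of_singleton {α : Type*} [DecidableEq α] (a : α) :
    Matrix.det (Matrix.of fun _ _ : ({a} : Finset α) => (1 : ℝ)) = 1 := by
  haveI : Unique (({a} : Finset α) : Type _) :=
    ⟨⟨⟨a, Finset.mem_singleton_self a⟩⟩, fun y => Subtype.ext (Finset.mem_singleton.mp y.2)⟩
  rw [Matrix.det_unique]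
  rfl

/-- For fixed `k ≥ 1` and fixed `x ∈ ℝ^k`, the `k`-th correlation function of the superposition
of `m` independent sine processes each rescaled by `m`, namely
`Σ_{p=1}^{min(m,k)} Σ_{π ∈ 𝔖(k,p)} m^{-k} (m!/(m−p)!) Π_j det[q((x_s − x_t)/m)]_{s,t ∈ π_j}`,
converges to `1` as `m → ∞`. -/
theorem tendsto_superposition_sine_corr (k : ℕ) (hk : 1 ≤ k) (x : Fin k → ℝ) :
    Tendsto (fun m : ℕ =>
        ∑ p ∈ Finset.Icc 1 (min m k),
          ∑ P ∈ Finset.univ.filter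
              (fun P : Finpartition (Finset.univ : Finset (Fin k)) => P.parts.card = p),
            (1 / (m : ℝ) ^ k) * (m.descFactorial p : ℝ) *
              ∏ b ∈ P.parts,
                Matrix.det (Matrix.of fun s t : b => sineq (((x s : ℝ) - x t) / m)))
      atTop (nhds 1) := by
  classical
  haveI : NeZero k := ⟨by omega⟩
  have hcardu : (Finset.univ : Finset (Fin k)).card = k := by
    simp
  have hcard : ∀ P : Finpartition (Finset.univ : Finset (Fin k)),
      P.parts.card ∈ Finset.Icc 1 k := by
    intro P
    rw [Finset.mem_Icc]
    constructor
    · rw [Nat.one_le_iff_ne_zero, ← Nat.pos_iff_ne_zero, Finset.card_pos]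
      exact P.parts_nonempty (by
        simp only [Finset.bot_eq_empty, ← Finset.nonempty_iff_ne_empty]
        exact Finset.univ_nonempty)
    · calc P.parts.card ≤ (Finset.univ : Finset (Fin k)).card := P.card_parts_le_card
        _ = k := hcardu
  -- limit value for each partition
  set L : Finpartition (Finset.univ : Finset (Fin k)) → ℝ := fun P =>
    (if P.parts.card = k then 1 else 0) *
      ∏ b ∈ P.parts, Matrix.det (Matrix.of fun _ _ : b => (1 : ℝ)) with hL
  have key : Tendsto (fun m : ℕ =>
      ∑ P : Finpartition (Finset.univ : Finset (Fin k)),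
        (1 / (m : ℝ) ^ k) * (m.descFactorial P.parts.card : ℝ) *
          ∏ b ∈ P.parts,
            Matrix.det (Matrix.of fun s t : b => sineq (((x s : ℝ) - x t) / m)))
      atTop (nhds (∑ P : Finpartition (Finset.univ : Finset (Fin k)), L P)) := by
    refine tendsto_finset_sum _ fun P _ => ?_
    exact (tendsto_desc_div k P.parts.card (Finset.mem_Icc.mp (hcard P)).2 hk).mul
      (tendsto_finset_prod _ fun b _ => tendsto_det_block x b)
  have hsumL : ∑ P : Finpartition (Finset.univ : Finset (Fin k)), L P = 1 := by
    have hLP : ∀ P : Finpartition (Finset.univ : Finset (Fin k)),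
        L P = if P = ⊥ then 1 else 0 := by
      intro P
      by_cases hP : P = ⊥
      · subst hP
        rw [if_pos rfl, hL]
        simp only
        rw [if_pos (by rw [Finpartition.card_bot, hcardu])]
        rw [one_mul]
        rw [Finpartition.parts_bot]
        rw [Finset.prod_map]
        refine Finset.prod_eq_one fun a _ => ?_
        exact det_of_singleton a
      · rw [if_neg hP, hL]
        simp only
        rw [if_neg, zero_mul]
        intro hc
        exact hP (finpartition_eq_bot_of_card_parts P (by rw [hc, hcardu]))
    rw [Finset.sum_congr rfl fun P _ => hLP P]
    simp
  rw [hsumL] at key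
  refine key.congr' ?_
  filter_upwards [eventually_ge_atTop k] with m hm
  have hmin : min m k = k := min_eq_right hm
  rw [hmin]
  have hinner : ∀ p ∈ Finset.Icc 1 k,
      (∑ P ∈ Finset.univ.filter
          (fun P : Finpartition (Finset.univ : Finset (Fin k)) => P.parts.card = p),
        (1 / (m : ℝ) ^ k) * (m.descFactorial p : ℝ) *
          ∏ b ∈ P.parts,
            Matrix.det (Matrix.of fun s t : b => sineq (((x s : ℝ) - x t) / m)))
      = ∑ P ∈ Finset.univ.filter
          (fun P : Finpartition (Finset.univ : Finset (Fin k)) => P.parts.card = p),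
        (1 / (m : ℝ) ^ k) * (m.descFactorial P.parts.card : ℝ) *
          ∏ b ∈ P.parts,
            Matrix.det (Matrix.of fun s t : b => sineq (((x s : ℝ) - x t) / m)) := by
    intro p _
    refine Finset.sum_congr rfl fun P hP => ?_
    rw [(Finset.mem_filter.mp hP).2]
  rw [Finset.sum_congr rfl hinner]
  exact (Finset.sum_fiberwise_of_maps_to (fun P _ => hcard P) _).symm
end

section
/- Let σ, τ be permutations of {1,…,k}, not both the identity. Fix z ∈ ℝ^k and η ∈ {0,1}^k, and for x ∈ [0,2π]^k set y_i = y_i(m,n) = (2π/(mn)) z_i − x_i + 2πη_i + π. Then for Lebesgue-almost every x ∈ [0,2π]^k, the product Π_{i=1}^k (2π/m) s_m(x_i − x_σ(i)) · (2π/n) s_n(y_i − y_τ(i)) tends to 0 as m, n → ∞, and it is uniformly bounded by 1. -/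
open Real Filter MeasureTheory

/-- The change of variables `y_i = (2π/(mn)) z_i − x_i + 2πη_i + π`. -/
noncomputable def yfun {k : ℕ} (z η : Fin k → ℝ) (m n : ℕ) (x : Fin k → ℝ) (i : Fin k) : ℝ :=
  2 * Real.pi / (m * n) * z i - x i + 2 * Real.pi * η i + Real.pi

lemma abs_sin_nat_mul_le (n : ℕ) (t : ℝ) : |Real.sin (n * t)| ≤ n * |Real.sin t| := by
  induction n with
  | zero => simp
  | succ n ih =>
    have h : ((n : ℝ) + 1) * t = n * t + t := by ring
    push_cast
    rw [h, Real.sin_add]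
    calc |Real.sin (n*t) * Real.cos t + Real.cos (n*t) * Real.sin t|
        ≤ |Real.sin (n*t) * Real.cos t| + |Real.cos (n*t) * Real.sin t| := abs_add_le _ _
      _ ≤ |Real.sin (n*t)| * 1 + 1 * |Real.sin t| := by
          rw [abs_mul, abs_mul]
          gcongr
          · exact Real.abs_cos_le_one _
          · exact Real.abs_cos_le_one _
      _ ≤ (n : ℝ) * |Real.sin t| + 1 * |Real.sin t| := by
          rw [mul_one]; gcongr
      _ = ((n : ℝ) + 1) * |Real.sin t| := by ring

lemma term_abs_le_one (n : ℕ) (u : ℝ) : |2 * Real.pi / n * sn n u| ≤ 1 := by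
  rcases Nat.eq_zero_or_pos n with hn | hn
  · simp [hn]
  have hn' : (0:ℝ) < n := by exact_mod_cast hn
  unfold sn
  split_ifs with h
  · have hS : |∑ j ∈ Finset.range n, Real.cos (((j : ℝ) - ((n : ℝ) - 1) / 2) * u)| ≤ n := by
      calc |∑ j ∈ Finset.range n, Real.cos (((j : ℝ) - ((n : ℝ) - 1) / 2) * u)|
          ≤ ∑ j ∈ Finset.range n, |Real.cos (((j : ℝ) - ((n : ℝ) - 1) / 2) * u)| :=
            Finset.abs_sum_le_sum_abs _ _
        _ ≤ ∑ _j ∈ Finset.range n, (1:ℝ) :=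
            Finset.sum_le_sum fun j _ => Real.abs_cos_le_one _
        _ = n := by simp
    have hval : 2 * Real.pi / n * ((1 / (2 * Real.pi)) *
        ∑ j ∈ Finset.range n, Real.cos (((j : ℝ) - ((n : ℝ) - 1) / 2) * u)) =
        (∑ j ∈ Finset.range n, Real.cos (((j : ℝ) - ((n : ℝ) - 1) / 2) * u)) / n := by
      field_simp
      ring_nf
      exact Finset.sum_congr rfl fun j _ => by ring_nf
    rw [hval, abs_div, abs_of_pos hn', div_le_one hn']
    exact hS
  · have hval : 2 * Real.pi / n * ((1 / (2 * Real.pi)) * Real.sin ((n : ℝ) * u / 2) /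
        Real.sin (u / 2)) = Real.sin ((n:ℝ) * (u / 2)) / ((n:ℝ) * Real.sin (u / 2)) := by
      field_simp
    rw [hval, abs_div, abs_mul, abs_of_pos hn', div_le_one (by positivity)]
    exact abs_sin_nat_mul_le n (u/2)

lemma term_abs_le (n : ℕ) (hn : 1 ≤ n) (u : ℝ) (hu : Real.sin (u / 2) ≠ 0) :
    |2 * Real.pi / n * sn n u| ≤ 1 / (n * |Real.sin (u / 2)|) := by
  have hn' : (0:ℝ) < n := by exact_mod_cast hn
  unfold sn
  rw [if_neg hu]
  have hval : 2 * Real.pi / n * ((1 / (2 * Real.pi)) * Real.sin ((n : ℝ) * u / 2) /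
      Real.sin (u / 2)) = Real.sin ((n:ℝ) * (u / 2)) / ((n:ℝ) * Real.sin (u / 2)) := by
    field_simp
  rw [hval, abs_div, abs_mul, abs_of_pos hn']
  gcongr
  exact Real.abs_sin_le_one _

lemma null_diff (k : ℕ) (i j : Fin k) (hij : i ≠ j) (c : ℝ) :
    volume {x : Fin k → ℝ | x i - x j = c} = 0 := by
  set L : (Fin k → ℝ) →ₗ[ℝ] ℝ :=
    (LinearMap.proj i : (Fin k → ℝ) →ₗ[ℝ] ℝ) - LinearMap.proj j with hL
  have hker : LinearMap.ker L ≠ ⊤ := by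
    intro h
    have h1 : Pi.single i (1:ℝ) ∈ LinearMap.ker L := h ▸ Submodule.mem_top
    rw [LinearMap.mem_ker] at h1
    simp [hL, Pi.single_eq_same, Pi.single_eq_of_ne (Ne.symm hij)] at h1
  set p : Fin k → ℝ := Pi.single i c with hp
  have hset : {x : Fin k → ℝ | x i - x j = c} =
      (fun x => x + (-p)) ⁻¹' (LinearMap.ker L : Set (Fin k → ℝ)) := by
    ext x
    simp only [Set.mem_preimage, SetLike.mem_coe, LinearMap.mem_ker, hL, hp,
      LinearMap.sub_apply, LinearMap.proj_apply, Set.mem_setOf_eq, Pi.add_apply,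
      Pi.neg_apply, Pi.single_eq_same, Pi.single_eq_of_ne (Ne.symm hij)]
    constructor
    · intro h; linarith [h]
    · intro h; linarith [h]
  rw [hset, measure_preimage_add_right]
  exact Measure.addHaar_submodule volume _ hker

lemma ae_ne (k : ℕ) : ∀ᵐ x : Fin k → ℝ ∂volume,
    ∀ i j : Fin k, i ≠ j → ∀ l : ℤ, x i - x j ≠ 2 * Real.pi * l := by
  refine ae_all_iff.2 fun i => ae_all_iff.2 fun j => ?_
  by_cases hij : i = j
  · exact Filter.Eventually.of_forall fun x h => absurd hij h
  · refine ae_all_iff.2 fun _ => ae_all_iff.2 fun l => ?_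
    rw [ae_iff]
    simpa using null_diff k i j hij (2 * Real.pi * l)

lemma abs_prod_le_single {k : ℕ} (f : Fin k → ℝ) (i₀ : Fin k) (h : ∀ i, |f i| ≤ 1) :
    |∏ i, f i| ≤ |f i₀| := by
  rw [Finset.abs_prod, ← Finset.mul_prod_erase Finset.univ _ (Finset.mem_univ i₀)]
  exact mul_le_of_le_one_right (abs_nonneg _)
    (Finset.prod_le_one (fun i _ => abs_nonneg _) (fun i _ => h i))


/-- Let `σ, τ` be permutations of `{1,…,k}`, not both the identity, and fix `z ∈ ℝ^k`,
`η ∈ {0,1}^k`; set `y_i = (2π/(mn)) z_i − x_i + 2πη_i + π`. Then for Lebesgue-a.e.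
`x ∈ [0,2π]^k` the product `Π_i (2π/m) s_m(x_i − x_{σ(i)}) · (2π/n) s_n(y_i − y_{τ(i)})`
tends to `0` as `m, n → ∞`, and it is uniformly bounded by `1`. -/
theorem prod_perm_term_tendsto_zero (k : ℕ) (σ τ : Equiv.Perm (Fin k))
    (hστ : ¬(σ = 1 ∧ τ = 1)) (z η : Fin k → ℝ) (hη : ∀ i, η i = 0 ∨ η i = 1) :
    (∀ᵐ x ∂((volume : Measure (Fin k → ℝ)).restrict
        (Set.univ.pi fun _ : Fin k => Set.Icc (0 : ℝ) (2 * Real.pi))),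
      Tendsto (fun mn : ℕ × ℕ =>
          ∏ i : Fin k,
            (2 * Real.pi / mn.1 * sn mn.1 (x i - x (σ i))) *
              (2 * Real.pi / mn.2 *
                sn mn.2 (yfun z η mn.1 mn.2 x i - yfun z η mn.1 mn.2 x (τ i))))
        (atTop ×ˢ atTop) (nhds 0)) ∧
    ∀ m n : ℕ, 1 ≤ m → 1 ≤ n → ∀ x : Fin k → ℝ,
      |∏ i : Fin k,
          (2 * Real.pi / m * sn m (x i - x (σ i))) *
            (2 * Real.pi / n * sn n (yfun z η m n x i - yfun z η m n x (τ i)))| ≤ 1 := by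
  have hbound : ∀ (m n : ℕ) (x : Fin k → ℝ) (i : Fin k),
      |(2 * Real.pi / m * sn m (x i - x (σ i))) *
        (2 * Real.pi / n * sn n (yfun z η m n x i - yfun z η m n x (τ i)))| ≤ 1 := by
    intro m n x i
    rw [abs_mul]
    exact mul_le_one₀ (term_abs_le_one _ _) (abs_nonneg _) (term_abs_le_one _ _)
  constructor
  · have hae : ∀ᵐ x ∂((volume : Measure (Fin k → ℝ)).restrict
        (Set.univ.pi fun _ : Fin k => Set.Icc (0 : ℝ) (2 * Real.pi))),
        ∀ i j : Fin k, i ≠ j → ∀ l : ℤ, x i - x j ≠ 2 * Real.pi * l :=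
      ae_restrict_of_ae (ae_ne k)
    filter_upwards [hae] with x hx
    rcases not_and_or.mp hστ with hσ | hτ
    · -- σ ≠ 1
      obtain ⟨i₀, hi₀⟩ : ∃ i, σ i ≠ i := by
        by_contra h; push_neg at h; exact hσ (Equiv.ext h)
      have hu : Real.sin ((x i₀ - x (σ i₀)) / 2) ≠ 0 := by
        intro h
        rw [Real.sin_eq_zero_iff] at h
        obtain ⟨l, hl⟩ := h
        exact hx i₀ (σ i₀) (Ne.symm hi₀) l (by linarith [hl])
      set c := |Real.sin ((x i₀ - x (σ i₀)) / 2)| with hc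
      have hcpos : 0 < c := abs_pos.2 hu
      refine squeeze_zero_norm' (a := fun mn : ℕ × ℕ => (1 / c) * (1 / (mn.1 : ℝ))) ?_ ?_
      · filter_upwards [(eventually_ge_atTop 1 : ∀ᶠ m : ℕ in atTop, 1 ≤ m).prod_mk (eventually_ge_atTop 1)]
          with mn hmn
        obtain ⟨hm, hn⟩ := hmn
        have hm' : (0:ℝ) < mn.1 := by exact_mod_cast hm
        calc ‖∏ i : Fin k,
              (2 * Real.pi / mn.1 * sn mn.1 (x i - x (σ i))) *
                (2 * Real.pi / mn.2 *
                  sn mn.2 (yfun z η mn.1 mn.2 x i - yfun z η mn.1 mn.2 x (τ i)))‖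
            = |∏ i : Fin k,
              (2 * Real.pi / mn.1 * sn mn.1 (x i - x (σ i))) *
                (2 * Real.pi / mn.2 *
                  sn mn.2 (yfun z η mn.1 mn.2 x i - yfun z η mn.1 mn.2 x (τ i)))| :=
              Real.norm_eq_abs _
          _ ≤ |(2 * Real.pi / mn.1 * sn mn.1 (x i₀ - x (σ i₀))) *
                (2 * Real.pi / mn.2 *
                  sn mn.2 (yfun z η mn.1 mn.2 x i₀ - yfun z η mn.1 mn.2 x (τ i₀)))| :=
              abs_prod_le_single _ i₀ (hbound mn.1 mn.2 x)
          _ ≤ |2 * Real.pi / mn.1 * sn mn.1 (x i₀ - x (σ i₀))| * 1 := by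
              rw [abs_mul]; gcongr
              exact term_abs_le_one _ _
          _ = |2 * Real.pi / mn.1 * sn mn.1 (x i₀ - x (σ i₀))| := mul_one _
          _ ≤ 1 / (mn.1 * c) := term_abs_le mn.1 hm _ hu
          _ = (1 / c) * (1 / (mn.1 : ℝ)) := by
              rw [div_mul_div_comm, one_mul, mul_comm]
      · have := (tendsto_one_div_atTop_nhds_zero_nat.comp (tendsto_fst : Tendsto Prod.fst (atTop ×ˢ (atTop : Filter ℕ)) atTop)).const_mul (1 / c)
        simpa using this
    · -- τ ≠ 1
      obtain ⟨i₀, hi₀⟩ : ∃ i, τ i ≠ i := by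
        by_contra h; push_neg at h; exact hτ (Equiv.ext h)
      set d := z i₀ - z (τ i₀) with hd
      set u₀ := x (τ i₀) - x i₀ + 2 * Real.pi * (η i₀ - η (τ i₀)) with hu₀
      have hy : ∀ m n : ℕ, yfun z η m n x i₀ - yfun z η m n x (τ i₀)
          = 2 * Real.pi / (m * n) * d + u₀ := by
        intro m n; simp only [yfun, hd, hu₀]; ring
      obtain ⟨e, he⟩ : ∃ e : ℤ, η i₀ - η (τ i₀) = (e : ℝ) := by
        rcases hη i₀ with h1 | h1 <;> rcases hη (τ i₀) with h2 | h2
        · exact ⟨0, by simp [h1, h2]⟩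
        · exact ⟨-1, by simp [h1, h2]⟩
        · exact ⟨1, by simp [h1, h2]⟩
        · exact ⟨0, by simp [h1, h2]⟩
      have hu : Real.sin (u₀ / 2) ≠ 0 := by
        intro h
        rw [Real.sin_eq_zero_iff] at h
        obtain ⟨l, hl⟩ := h
        refine hx (τ i₀) i₀ hi₀ (l - e) ?_
        rw [hu₀, he] at hl
        push_cast
        linear_combination (-2:ℝ) * hl
      set c := |Real.sin (u₀ / 2)| with hc
      have hcpos : 0 < c := abs_pos.2 hu
      have hconv : Tendsto (fun mn : ℕ × ℕ => 2 * Real.pi / (mn.1 * mn.2) * d + u₀)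
          (atTop ×ˢ atTop) (nhds u₀) := by
        have h0 : Tendsto (fun mn : ℕ × ℕ => 2 * Real.pi / ((mn.1 : ℝ) * mn.2) * d)
            (atTop ×ˢ atTop) (nhds 0) := by
          refine squeeze_zero_norm'
            (a := fun mn : ℕ × ℕ => (2 * Real.pi * |d|) * (1 / (mn.2 : ℝ))) ?_ ?_
          · filter_upwards [(eventually_ge_atTop 1 : ∀ᶠ m : ℕ in atTop, 1 ≤ m).prod_mk (eventually_ge_atTop 1)]
              with mn hmn
            obtain ⟨hm, hn⟩ := hmn
            have hm' : (1:ℝ) ≤ mn.1 := by exact_mod_cast hm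
            have hn' : (1:ℝ) ≤ mn.2 := by exact_mod_cast hn
            have hmn' : (mn.2 : ℝ) ≤ mn.1 * mn.2 := le_mul_of_one_le_left (by linarith) hm'
            calc ‖2 * Real.pi / ((mn.1 : ℝ) * mn.2) * d‖
                = 2 * Real.pi / ((mn.1 : ℝ) * mn.2) * |d| := by
                  rw [Real.norm_eq_abs, abs_mul, abs_of_nonneg (by positivity)]
              _ ≤ 2 * Real.pi / (mn.2 : ℝ) * |d| := by
                  gcongr
              _ = (2 * Real.pi * |d|) * (1 / (mn.2 : ℝ)) := by ring
          · have := (tendsto_one_div_atTop_nhds_zero_nat.comp (tendsto_snd : Tendsto Prod.snd ((atTop : Filter ℕ) ×ˢ atTop) atTop)).const_mul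
              (2 * Real.pi * |d|)
            simpa using this
        simpa using h0.add (tendsto_const_nhds (x := u₀))
      have hsin : Tendsto
          (fun mn : ℕ × ℕ => |Real.sin ((2 * Real.pi / ((mn.1:ℝ) * mn.2) * d + u₀) / 2)|)
          (atTop ×ˢ atTop) (nhds c) := by
        have hcont : Continuous fun t : ℝ => |Real.sin (t / 2)| :=
          continuous_abs.comp (Real.continuous_sin.comp (continuous_id.div_const 2))
        exact (hcont.tendsto u₀).comp hconv
      have hev : ∀ᶠ mn : ℕ × ℕ in atTop ×ˢ atTop,
          c / 2 < |Real.sin ((2 * Real.pi / ((mn.1:ℝ) * mn.2) * d + u₀) / 2)| :=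
        hsin.eventually (eventually_gt_nhds (by linarith))
      refine squeeze_zero_norm' (a := fun mn : ℕ × ℕ => (2 / c) * (1 / (mn.2 : ℝ))) ?_ ?_
      · filter_upwards [hev, (eventually_ge_atTop 1 : ∀ᶠ m : ℕ in atTop, 1 ≤ m).prod_mk (eventually_ge_atTop 1)]
          with mn h1 h2
        obtain ⟨hm, hn⟩ := h2
        have hn' : (0:ℝ) < mn.2 := by exact_mod_cast hn
        have harg := hy mn.1 mn.2
        have hne : Real.sin ((yfun z η mn.1 mn.2 x i₀ - yfun z η mn.1 mn.2 x (τ i₀)) / 2) ≠ 0 := by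
          rw [harg]
          intro h0
          rw [h0, abs_zero] at h1
          linarith
        calc ‖∏ i : Fin k,
              (2 * Real.pi / mn.1 * sn mn.1 (x i - x (σ i))) *
                (2 * Real.pi / mn.2 *
                  sn mn.2 (yfun z η mn.1 mn.2 x i - yfun z η mn.1 mn.2 x (τ i)))‖
            = |∏ i : Fin k,
              (2 * Real.pi / mn.1 * sn mn.1 (x i - x (σ i))) *
                (2 * Real.pi / mn.2 *
                  sn mn.2 (yfun z η mn.1 mn.2 x i - yfun z η mn.1 mn.2 x (τ i)))| :=
              Real.norm_eq_abs _
          _ ≤ |(2 * Real.pi / mn.1 * sn mn.1 (x i₀ - x (σ i₀))) *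
                (2 * Real.pi / mn.2 *
                  sn mn.2 (yfun z η mn.1 mn.2 x i₀ - yfun z η mn.1 mn.2 x (τ i₀)))| :=
              abs_prod_le_single _ i₀ (hbound mn.1 mn.2 x)
          _ ≤ 1 * |2 * Real.pi / mn.2 *
                  sn mn.2 (yfun z η mn.1 mn.2 x i₀ - yfun z η mn.1 mn.2 x (τ i₀))| := by
              rw [abs_mul]; gcongr
              exact term_abs_le_one _ _
          _ = |2 * Real.pi / mn.2 *
                  sn mn.2 (yfun z η mn.1 mn.2 x i₀ - yfun z η mn.1 mn.2 x (τ i₀))| := one_mul _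
          _ ≤ 1 / (mn.2 *
                |Real.sin ((yfun z η mn.1 mn.2 x i₀ - yfun z η mn.1 mn.2 x (τ i₀)) / 2)|) :=
              term_abs_le mn.2 hn _ hne
          _ ≤ 1 / (mn.2 * (c / 2)) := by
              rw [harg]
              gcongr
          _ = (2 / c) * (1 / (mn.2 : ℝ)) := by
              field_simp
      · have := (tendsto_one_div_atTop_nhds_zero_nat.comp (tendsto_snd : Tendsto Prod.snd ((atTop : Filter ℕ) ×ˢ atTop) atTop)).const_mul (2 / c)
        simpa using this
  · intro m n _ _ x
    rw [Finset.abs_prod]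
    exact Finset.prod_le_one (fun i _ => abs_nonneg _) (fun i _ => hbound m n x i)
end

section
/- For fixed z ∈ ℝ^k and η ∈ {0,1}^k with y_i = (2π/(mn)) z_i − x_i + 2πη_i + π, the quantity ∫_{[0,2π]^k} (2π)^{-k} · det[(2π/m) s_m(x_s − x_t)]_{s,t=1}^k · det[(2π/n) s_n(y_s − y_t)]_{s,t=1}^k dx converges to 1 as m, n → ∞. -/
open Real Filter MeasureTheory

namespace DetDetAux

lemma abs_sin_nat_mul (n : ℕ) (x : ℝ) : |Real.sin (n * x)| ≤ n * |Real.sin x| := by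
  induction n with
  | zero => simp
  | succ n ih =>
    have h : ((n : ℝ) + 1) * x = n * x + x := by ring
    rw [Nat.cast_succ, h, Real.sin_add]
    calc |Real.sin (n * x) * Real.cos x + Real.cos (n * x) * Real.sin x|
        ≤ |Real.sin (n * x) * Real.cos x| + |Real.cos (n * x) * Real.sin x| := abs_add_le _ _
      _ ≤ |Real.sin (n * x)| * 1 + 1 * |Real.sin x| := by
          rw [abs_mul, abs_mul]
          gcongr
          · exact Real.abs_cos_le_one x
          · exact Real.abs_cos_le_one _
      _ ≤ (n : ℝ) * |Real.sin x| + 1 * |Real.sin x| :=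
          add_le_add (by rw [mul_one]; exact ih) le_rfl
      _ = ((n : ℝ) + 1) * |Real.sin x| := by ring

lemma measurable_sn (n : ℕ) : Measurable (sn n) := by
  unfold sn
  apply Measurable.ite
  · exact measurableSet_eq_fun (Real.measurable_sin.comp (measurable_id.div_const 2))
      measurable_const
  · fun_prop
  · apply Measurable.div <;> fun_prop

lemma sn_zero (n : ℕ) : sn n 0 = n / (2 * π) := by
  simp [sn, Real.sin_zero]
  ring

lemma factor_zero {n : ℕ} (hn : 1 ≤ n) : 2 * π / n * sn n 0 = 1 := by
  rw [sn_zero]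
  have h1 : (n : ℝ) ≠ 0 := Nat.cast_ne_zero.mpr (by omega)
  have h2 : (2 : ℝ) * π ≠ 0 := by positivity
  field_simp

lemma abs_sn_le (n : ℕ) (u : ℝ) : |sn n u| ≤ n / (2 * π) := by
  have hπ : (0:ℝ) < 2 * π := by positivity
  unfold sn
  split_ifs with h
  · rw [abs_mul]
    calc |1 / (2*π)| * |∑ j ∈ Finset.range n, Real.cos (((j : ℝ) - ((n : ℝ) - 1) / 2) * u)|
        ≤ (1 / (2*π)) * n := by
          rw [abs_of_pos (by positivity)]
          gcongr
          calc |∑ j ∈ Finset.range n, Real.cos (((j : ℝ) - ((n : ℝ) - 1) / 2) * u)|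
              ≤ ∑ j ∈ Finset.range n, |Real.cos (((j : ℝ) - ((n : ℝ) - 1) / 2) * u)| :=
                Finset.abs_sum_le_sum_abs _ _
            _ ≤ ∑ j ∈ Finset.range n, 1 := by
                apply Finset.sum_le_sum
                intro i _
                exact Real.abs_cos_le_one _
            _ = n := by simp
      _ = n / (2*π) := by ring
  · rw [abs_div, abs_mul]
    rw [div_le_iff₀ (abs_pos.mpr h)]
    have key : |Real.sin ((n:ℝ) * u / 2)| ≤ n * |Real.sin (u/2)| := by
      have h5 : (n:ℝ) * u / 2 = n * (u/2) := by ring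
      rw [h5]
      exact abs_sin_nat_mul n (u/2)
    calc |1 / (2*π)| * |Real.sin ((n:ℝ) * u / 2)| ≤ (1/(2*π)) * (n * |Real.sin (u/2)|) := by
          rw [abs_of_pos (by positivity)]
          gcongr
      _ = n / (2*π) * |Real.sin (u/2)| := by ring

lemma abs_factor_le_one (n : ℕ) (u : ℝ) : |2 * π / n * sn n u| ≤ 1 := by
  rcases Nat.eq_zero_or_pos n with h | h
  · subst h; simp
  · have hn : (0:ℝ) < n := by exact_mod_cast h
    rw [abs_mul]
    have h1 : |2 * π / (n:ℝ)| = 2 * π / n := abs_of_pos (by positivity)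
    rw [h1]
    calc 2 * π / n * |sn n u| ≤ 2 * π / n * (n / (2*π)) := by
          gcongr
          exact abs_sn_le n u
      _ = 1 := by field_simp

lemma abs_factor_le (n : ℕ) (u : ℝ) (h : Real.sin (u/2) ≠ 0) :
    |2 * π / n * sn n u| ≤ 1 / (n * |Real.sin (u/2)|) := by
  rcases Nat.eq_zero_or_pos n with hn | hn
  · subst hn; simp
  have hn' : (0:ℝ) < n := by exact_mod_cast hn
  have hπ : (2:ℝ) * π ≠ 0 := by positivity
  have heq : 2 * π / n * sn n u = Real.sin ((n:ℝ) * u / 2) / (n * Real.sin (u/2)) := by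
    rw [sn, if_neg h]
    field_simp
  have hden : |(n:ℝ) * Real.sin (u/2)| = (n:ℝ) * |Real.sin (u/2)| := by
    rw [abs_mul, abs_of_pos hn']
  have hdenpos : (0:ℝ) < |(n:ℝ) * Real.sin (u/2)| :=
    abs_pos.mpr (mul_ne_zero (ne_of_gt hn') h)
  rw [heq, abs_div]
  calc |Real.sin ((n:ℝ) * u / 2)| / |(n:ℝ) * Real.sin (u/2)|
      ≤ 1 / |(n:ℝ) * Real.sin (u/2)| := by
        gcongr
        exact abs_sin_le_one _
    _ = 1 / ((n:ℝ) * |Real.sin (u/2)|) := by rw [hden]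

lemma abs_prod_le_one {k : ℕ} (f : Fin k → ℝ) (h : ∀ s, |f s| ≤ 1) : |∏ s, f s| ≤ 1 := by
  rw [Finset.abs_prod]
  exact Finset.prod_le_one (fun i _ => abs_nonneg _) (fun i _ => h i)

lemma abs_prod_le_single {k : ℕ} (f : Fin k → ℝ) (s0 : Fin k) (h : ∀ s, |f s| ≤ 1) :
    |∏ s, f s| ≤ |f s0| := by
  rw [Finset.abs_prod, ← Finset.prod_erase_mul Finset.univ _ (Finset.mem_univ s0)]
  calc (∏ s ∈ Finset.univ.erase s0, |f s|) * |f s0| ≤ 1 * |f s0| := by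
        apply mul_le_mul_of_nonneg_right _ (abs_nonneg _)
        exact Finset.prod_le_one (fun i _ => abs_nonneg _) (fun i _ => h i)
    _ = |f s0| := one_mul _

lemma abs_sign {k : ℕ} (σ : Equiv.Perm (Fin k)) : |((Equiv.Perm.sign σ : ℤ) : ℝ)| = 1 := by
  rcases Int.units_eq_one_or (Equiv.Perm.sign σ) with h | h <;> rw [h] <;> norm_num

lemma exists_int_eta {a b : ℝ} (ha : a = 0 ∨ a = 1) (hb : b = 0 ∨ b = 1) :
    ∃ d : ℤ, (d : ℝ) = a - b := by
  rcases ha with h | h <;> rcases hb with h' | h' <;> subst h <;> subst h'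
  · exact ⟨0, by norm_num⟩
  · exact ⟨-1, by norm_num⟩
  · exact ⟨1, by norm_num⟩
  · exact ⟨0, by norm_num⟩

lemma abs_g_le {c e1 e2 P1 P2 q1 q2 : ℝ} (hc : 0 ≤ c) (he1 : |e1| = 1) (he2 : |e2| = 1)
    (h1 : |P1| ≤ q1) (h2 : |P2| ≤ q2) : |c * (e1 * P1) * (e2 * P2)| ≤ c * q1 * q2 := by
  have hq1 : 0 ≤ q1 := le_trans (abs_nonneg _) h1
  have hq2 : 0 ≤ q2 := le_trans (abs_nonneg _) h2
  rw [abs_mul, abs_mul, abs_mul, abs_mul, he1, he2, one_mul, one_mul, abs_of_nonneg hc]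
  exact mul_le_mul (mul_le_mul_of_nonneg_left h1 hc) h2 (abs_nonneg _) (by positivity)

lemma hyperplane_null {k : ℕ} {s t : Fin k} (hst : s ≠ t) (c : ℝ) :
    volume {x : Fin k → ℝ | x s - x t = c} = 0 := by
  classical
  set f : (Fin k → ℝ) →ₗ[ℝ] ℝ :=
    (LinearMap.proj s : (Fin k → ℝ) →ₗ[ℝ] ℝ) - (LinearMap.proj t : (Fin k → ℝ) →ₗ[ℝ] ℝ) with hf
  have hfapp : ∀ y : Fin k → ℝ, f y = y s - y t := fun y => rfl
  have hker : LinearMap.ker f ≠ ⊤ := by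
    rw [Ne, LinearMap.ker_eq_top]
    intro h
    have h1 : f (Pi.single s 1) = 0 := by rw [h]; rfl
    rw [hfapp] at h1
    rw [Pi.single_eq_same, Pi.single_eq_of_ne (Ne.symm hst)] at h1
    norm_num at h1
  set x0 : Fin k → ℝ := Pi.single s c with hx0def
  have hx0 : x0 s - x0 t = c := by
    rw [hx0def, Pi.single_eq_same, Pi.single_eq_of_ne (Ne.symm hst)]; ring
  have hset : {x : Fin k → ℝ | x s - x t = c}
      = (fun y => y + (-x0)) ⁻¹'
        ((LinearMap.ker f : Submodule ℝ (Fin k → ℝ)) : Set (Fin k → ℝ)) := by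
    ext y
    simp only [Set.mem_setOf_eq, Set.mem_preimage, SetLike.mem_coe, LinearMap.mem_ker, hfapp,
      Pi.add_apply, Pi.neg_apply]
    constructor
    · intro h; linarith [hx0]
    · intro h; linarith [hx0]
  rw [hset, measure_preimage_add_right]
  exact Measure.addHaar_submodule _ _ hker

noncomputable def gterm {k : ℕ} (z η : Fin k → ℝ)
    (p : Equiv.Perm (Fin k) × Equiv.Perm (Fin k)) (mn : ℕ × ℕ) (x : Fin k → ℝ) : ℝ :=
  1 / (2 * Real.pi) ^ k *
    (((Equiv.Perm.sign p.1 : ℤ) : ℝ) * ∏ s, 2 * Real.pi / mn.1 * sn mn.1 (x (p.1 s) - x s)) *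
    (((Equiv.Perm.sign p.2 : ℤ) : ℝ) *
      ∏ s, 2 * Real.pi / mn.2 * sn mn.2 (yfun z η mn.1 mn.2 x (p.2 s) - yfun z η mn.1 mn.2 x s))

def badSet {k : ℕ} (z η : Fin k → ℝ) : Set (Fin k → ℝ) :=
  {x | ∃ s t : Fin k, s ≠ t ∧ ∃ m n : ℕ, ∃ j : ℤ,
    x s - x t = 2 * Real.pi / ((m : ℝ) * (n : ℝ)) * (z s - z t)
      + 2 * Real.pi * (η s - η t) + 2 * Real.pi * (j : ℝ)}

lemma badSet_null {k : ℕ} (z η : Fin k → ℝ) : volume (badSet z η) = 0 := by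
  have hsub : badSet z η ⊆ ⋃ q : (Fin k × Fin k) × ℕ × ℕ × ℤ,
      {x : Fin k → ℝ | q.1.1 ≠ q.1.2 ∧ x q.1.1 - x q.1.2
        = 2 * Real.pi / ((q.2.1 : ℝ) * (q.2.2.1 : ℝ)) * (z q.1.1 - z q.1.2)
          + 2 * Real.pi * (η q.1.1 - η q.1.2) + 2 * Real.pi * ((q.2.2.2 : ℤ) : ℝ)} := by
    rintro x ⟨s, t, hst, m, n, j, hx⟩
    exact Set.mem_iUnion.mpr ⟨((s, t), (m, n, j)), hst, hx⟩
  refine measure_mono_null hsub (measure_iUnion_null fun q => ?_)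
  rcases q with ⟨⟨s, t⟩, m, n, j⟩
  by_cases hst : s = t
  · subst hst
    simp
  · exact measure_mono_null (fun x hx => hx.2) (hyperplane_null hst _)

lemma measurable_gterm {k : ℕ} (z η : Fin k → ℝ)
    (p : Equiv.Perm (Fin k) × Equiv.Perm (Fin k)) (mn : ℕ × ℕ) :
    Measurable (gterm z η p mn) := by
  have hA : Measurable fun x : Fin k → ℝ =>
      ∏ s, 2 * Real.pi / (mn.1 : ℝ) * sn mn.1 (x (p.1 s) - x s) := by
    apply Finset.measurable_prod
    intro s _
    exact ((measurable_sn mn.1).comp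
      ((measurable_pi_apply (p.1 s)).sub (measurable_pi_apply s))).const_mul _
  have hB : Measurable fun x : Fin k → ℝ =>
      ∏ s, 2 * Real.pi / (mn.2 : ℝ)
        * sn mn.2 (yfun z η mn.1 mn.2 x (p.2 s) - yfun z η mn.1 mn.2 x s) := by
    apply Finset.measurable_prod
    intro s _
    apply Measurable.const_mul
    apply (measurable_sn mn.2).comp
    have h1 : Measurable fun x : Fin k → ℝ => yfun z η mn.1 mn.2 x (p.2 s) := by
      unfold yfun; fun_prop
    have h2 : Measurable fun x : Fin k → ℝ => yfun z η mn.1 mn.2 x s := by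
      unfold yfun; fun_prop
    exact h1.sub h2
  exact (measurable_const.mul (hA.const_mul _)).mul (hB.const_mul _)

lemma abs_gterm_le {k : ℕ} (z η : Fin k → ℝ)
    (p : Equiv.Perm (Fin k) × Equiv.Perm (Fin k)) (mn : ℕ × ℕ) (x : Fin k → ℝ) :
    |gterm z η p mn x| ≤ 1 / (2 * Real.pi) ^ k := by
  have h1 : |∏ s, 2 * Real.pi / (mn.1 : ℝ) * sn mn.1 (x (p.1 s) - x s)| ≤ 1 :=
    abs_prod_le_one _ fun s => abs_factor_le_one _ _
  have h2 : |∏ s, 2 * Real.pi / (mn.2 : ℝ)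
      * sn mn.2 (yfun z η mn.1 mn.2 x (p.2 s) - yfun z η mn.1 mn.2 x s)| ≤ 1 :=
    abs_prod_le_one _ fun s => abs_factor_le_one _ _
  unfold gterm
  exact le_trans (abs_g_le (by positivity) (abs_sign p.1) (abs_sign p.2) h1 h2) (by simp)

lemma gterm_tendsto_zero {k : ℕ} (z η : Fin k → ℝ) (hη : ∀ i, η i = 0 ∨ η i = 1)
    (p : Equiv.Perm (Fin k) × Equiv.Perm (Fin k)) (hp : p ≠ (1, 1)) (x : Fin k → ℝ)
    (hx : x ∉ badSet z η) :
    Tendsto (fun mn => gterm z η p mn x) (atTop ×ˢ atTop) (nhds 0) := by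
  simp only [badSet, Set.mem_setOf_eq, not_exists, not_and] at hx
  have hsin : ∀ s t : Fin k, s ≠ t → Real.sin ((x s - x t) / 2) ≠ 0 := by
    intro s t hst hzero
    rcases Real.sin_eq_zero_iff.mp hzero with ⟨j, hj⟩
    obtain ⟨d, hd⟩ := exists_int_eta (hη s) (hη t)
    apply hx s t hst 0 0 (j - d)
    push_cast
    rw [← hd]
    norm_num
    linarith
  have hsiny : ∀ s t : Fin k, s ≠ t → ∀ m n : ℕ,
      Real.sin ((yfun z η m n x s - yfun z η m n x t) / 2) ≠ 0 := by
    intro s t hst m n hzero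
    rcases Real.sin_eq_zero_iff.mp hzero with ⟨j, hj⟩
    have hy : yfun z η m n x s - yfun z η m n x t
        = 2 * Real.pi / ((m : ℝ) * (n : ℝ)) * (z s - z t) - (x s - x t)
          + 2 * Real.pi * (η s - η t) := by
      unfold yfun; push_cast; ring
    rw [hy] at hj
    apply hx s t hst m n (-j)
    push_cast
    linarith
  have hcast1 : Tendsto (fun mn : ℕ × ℕ => ((mn.1 : ℝ)))
      (atTop ×ˢ atTop) atTop := tendsto_natCast_atTop_atTop.comp tendsto_fst
  have hcast2 : Tendsto (fun mn : ℕ × ℕ => ((mn.2 : ℝ)))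
      (atTop ×ˢ atTop) atTop := tendsto_natCast_atTop_atTop.comp tendsto_snd
  by_cases hσ : p.1 = 1
  · -- second permutation is nontrivial
    have hτ : p.2 ≠ 1 := fun h => hp (Prod.ext hσ h)
    have hs0' : ∃ s0, p.2 s0 ≠ s0 := by
      by_contra h
      push_neg at h
      exact hτ (Equiv.ext fun s => by simpa using h s)
    obtain ⟨s0, hs0⟩ := hs0'
    set w := x (p.2 s0) - x s0 with hwdef
    have hw : Real.sin (w / 2) ≠ 0 := hsin _ _ hs0
    set ε : ℕ × ℕ → ℝ :=
      fun mn => 2 * Real.pi / ((mn.1 : ℝ) * (mn.2 : ℝ)) * (z (p.2 s0) - z s0) with hε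
    have hu : ∀ mn : ℕ × ℕ, yfun z η mn.1 mn.2 x (p.2 s0) - yfun z η mn.1 mn.2 x s0
        = (ε mn - w) + 2 * Real.pi * (η (p.2 s0) - η s0) := by
      intro mn
      simp only [hε, hwdef]
      unfold yfun
      push_cast
      ring
    obtain ⟨d, hd⟩ := exists_int_eta (hη (p.2 s0)) (hη s0)
    have habs : ∀ mn : ℕ × ℕ,
        |Real.sin ((yfun z η mn.1 mn.2 x (p.2 s0) - yfun z η mn.1 mn.2 x s0) / 2)|
          = |Real.sin ((ε mn - w) / 2)| := by
      intro mn
      rw [hu mn, ← hd]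
      rw [show ((ε mn - w) + 2 * Real.pi * (d : ℝ)) / 2 = (ε mn - w) / 2 + (d : ℝ) * Real.pi
        by ring]
      rw [Real.sin_add_int_mul_pi, abs_mul]
      have habs1 : |((-1 : ℝ)) ^ (d : ℤ)| = 1 := by
        rcases Int.even_or_odd d with hp | hp
        · rw [hp.neg_one_zpow, abs_one]
        · rw [hp.neg_one_zpow, abs_neg, abs_one]
      rw [habs1, one_mul]
    have hεlim : Tendsto ε (atTop ×ˢ atTop) (nhds 0) := by
      have hmul : Tendsto (fun mn : ℕ × ℕ => (mn.1 : ℝ) * (mn.2 : ℝ)) (atTop ×ˢ atTop) atTop :=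
        hcast1.atTop_mul_atTop₀ hcast2
      have h0 : Tendsto (fun mn : ℕ × ℕ => 2 * Real.pi / ((mn.1 : ℝ) * (mn.2 : ℝ)))
          (atTop ×ˢ atTop) (nhds 0) := tendsto_const_nhds.div_atTop hmul
      simpa [hε] using h0.mul_const (z (p.2 s0) - z s0)
    have hsinlim : Tendsto (fun mn : ℕ × ℕ => |Real.sin ((ε mn - w) / 2)|)
        (atTop ×ˢ atTop) (nhds |Real.sin (w / 2)|) := by
      have h1 : Tendsto (fun mn : ℕ × ℕ => (ε mn - w) / 2) (atTop ×ˢ atTop)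
          (nhds ((0 - w) / 2)) := (hεlim.sub_const w).div_const 2
      have h2 := ((Real.continuous_sin.tendsto _).comp h1).abs
      have h4 : |Real.sin ((0 - w) / 2)| = |Real.sin (w / 2)| := by
        rw [show (0 - w) / 2 = -(w / 2) by ring, Real.sin_neg, abs_neg]
      rw [h4] at h2
      exact h2
    have hwpos : 0 < |Real.sin (w / 2)| := abs_pos.mpr hw
    have hinv : Tendsto (fun mn : ℕ × ℕ => |Real.sin ((ε mn - w) / 2)|⁻¹) (atTop ×ˢ atTop)
        (nhds |Real.sin (w / 2)|⁻¹) := hsinlim.inv₀ (ne_of_gt hwpos)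
    have hn0 : Tendsto (fun mn : ℕ × ℕ => ((mn.2 : ℝ))⁻¹) (atTop ×ˢ atTop) (nhds 0) :=
      tendsto_inv_atTop_zero.comp hcast2
    have hBlim : Tendsto (fun mn : ℕ × ℕ =>
        1 / (2 * Real.pi) ^ k * 1 * (1 / ((mn.2 : ℝ) * |Real.sin ((ε mn - w) / 2)|)))
        (atTop ×ˢ atTop) (nhds 0) := by
      have h5 := (hn0.mul hinv).const_mul (1 / (2 * Real.pi) ^ k)
      have h6 : Tendsto (fun mn : ℕ × ℕ =>
          1 / (2 * Real.pi) ^ k * (((mn.2 : ℝ))⁻¹ * |Real.sin ((ε mn - w) / 2)|⁻¹))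
          (atTop ×ˢ atTop) (nhds 0) := by simpa using h5
      apply h6.congr
      intro mn
      ring
    apply squeeze_zero_norm _ hBlim
    intro mn
    rw [Real.norm_eq_abs]
    have h1 : |∏ s, 2 * Real.pi / (mn.1 : ℝ) * sn mn.1 (x (p.1 s) - x s)| ≤ 1 :=
      abs_prod_le_one _ fun s => abs_factor_le_one _ _
    have h2 : |∏ s, 2 * Real.pi / (mn.2 : ℝ)
        * sn mn.2 (yfun z η mn.1 mn.2 x (p.2 s) - yfun z η mn.1 mn.2 x s)|
        ≤ 1 / ((mn.2 : ℝ) * |Real.sin ((ε mn - w) / 2)|) := by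
      calc |∏ s, 2 * Real.pi / (mn.2 : ℝ)
          * sn mn.2 (yfun z η mn.1 mn.2 x (p.2 s) - yfun z η mn.1 mn.2 x s)|
          ≤ |2 * Real.pi / (mn.2 : ℝ)
            * sn mn.2 (yfun z η mn.1 mn.2 x (p.2 s0) - yfun z η mn.1 mn.2 x s0)| :=
          abs_prod_le_single _ s0 fun s => abs_factor_le_one _ _
        _ ≤ 1 / ((mn.2 : ℝ)
            * |Real.sin ((yfun z η mn.1 mn.2 x (p.2 s0) - yfun z η mn.1 mn.2 x s0) / 2)|) :=
          abs_factor_le _ _ (hsiny _ _ hs0 mn.1 mn.2)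
        _ = 1 / ((mn.2 : ℝ) * |Real.sin ((ε mn - w) / 2)|) := by rw [habs mn]
    exact abs_g_le (by positivity) (abs_sign p.1) (abs_sign p.2) h1 h2
  · -- first permutation is nontrivial
    have hs0' : ∃ s0, p.1 s0 ≠ s0 := by
      by_contra h
      push_neg at h
      exact hσ (Equiv.ext fun s => by simpa using h s)
    obtain ⟨s0, hs0⟩ := hs0'
    set w := x (p.1 s0) - x s0 with hwdef
    have hw : Real.sin (w / 2) ≠ 0 := hsin _ _ hs0
    have hwpos : 0 < |Real.sin (w / 2)| := abs_pos.mpr hw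
    have hn0 : Tendsto (fun mn : ℕ × ℕ => ((mn.1 : ℝ))⁻¹) (atTop ×ˢ atTop) (nhds 0) :=
      tendsto_inv_atTop_zero.comp hcast1
    have hBlim : Tendsto (fun mn : ℕ × ℕ =>
        1 / (2 * Real.pi) ^ k * (1 / ((mn.1 : ℝ) * |Real.sin (w / 2)|)) * 1)
        (atTop ×ˢ atTop) (nhds 0) := by
      have h5 := hn0.const_mul (1 / (2 * Real.pi) ^ k * |Real.sin (w / 2)|⁻¹)
      have h6 : Tendsto (fun mn : ℕ × ℕ =>
          1 / (2 * Real.pi) ^ k * |Real.sin (w / 2)|⁻¹ * ((mn.1 : ℝ))⁻¹)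
          (atTop ×ˢ atTop) (nhds 0) := by simpa using h5
      apply h6.congr
      intro mn
      ring
    apply squeeze_zero_norm _ hBlim
    intro mn
    rw [Real.norm_eq_abs]
    have h1 : |∏ s, 2 * Real.pi / (mn.1 : ℝ) * sn mn.1 (x (p.1 s) - x s)|
        ≤ 1 / ((mn.1 : ℝ) * |Real.sin (w / 2)|) := by
      calc |∏ s, 2 * Real.pi / (mn.1 : ℝ) * sn mn.1 (x (p.1 s) - x s)|
          ≤ |2 * Real.pi / (mn.1 : ℝ) * sn mn.1 (x (p.1 s0) - x s0)| :=
          abs_prod_le_single _ s0 fun s => abs_factor_le_one _ _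
        _ ≤ 1 / ((mn.1 : ℝ) * |Real.sin ((x (p.1 s0) - x s0) / 2)|) :=
          abs_factor_le _ _ (hsin _ _ hs0)
        _ = 1 / ((mn.1 : ℝ) * |Real.sin (w / 2)|) := by rw [hwdef]
    have h2 : |∏ s, 2 * Real.pi / (mn.2 : ℝ)
        * sn mn.2 (yfun z η mn.1 mn.2 x (p.2 s) - yfun z η mn.1 mn.2 x s)| ≤ 1 :=
      abs_prod_le_one _ fun s => abs_factor_le_one _ _
    exact abs_g_le (by positivity) (abs_sign p.1) (abs_sign p.2) h1 h2

end DetDetAux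


/-- For fixed `z ∈ ℝ^k` and `η ∈ {0,1}^k`, with `y_i = (2π/(mn)) z_i − x_i + 2πη_i + π`,
`∫_{[0,2π]^k} (2π)^{-k} det[(2π/m) s_m(x_s − x_t)] · det[(2π/n) s_n(y_s − y_t)] dx → 1`
as `m, n → ∞`. -/
theorem tendsto_integral_det_det (k : ℕ) (hk : 1 ≤ k) (z η : Fin k → ℝ)
    (hη : ∀ i, η i = 0 ∨ η i = 1) :
    Tendsto (fun mn : ℕ × ℕ =>
        ∫ x in (Set.univ.pi fun _ : Fin k => Set.Icc (0 : ℝ) (2 * Real.pi)),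
          (1 / (2 * Real.pi) ^ k) *
            Matrix.det (Matrix.of fun s t : Fin k =>
              2 * Real.pi / mn.1 * sn mn.1 (x s - x t)) *
            Matrix.det (Matrix.of fun s t : Fin k =>
              2 * Real.pi / mn.2 *
                sn mn.2 (yfun z η mn.1 mn.2 x s - yfun z η mn.1 mn.2 x t)))
      (atTop ×ˢ atTop) (nhds 1) := by
  classical
  open DetDetAux in
  have hπ : (0:ℝ) < 2 * Real.pi := by positivity
  set I : Set (Fin k → ℝ) := Set.univ.pi fun _ : Fin k => Set.Icc (0:ℝ) (2 * Real.pi) with hI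
  have hIvol : volume I = ENNReal.ofReal ((2 * Real.pi) ^ k) := by
    rw [hI, volume_pi_pi]
    rw [Real.volume_Icc, sub_zero, Finset.prod_const, Finset.card_univ, Fintype.card_fin]
    rw [← ENNReal.ofReal_pow hπ.le]
  have hIfin : volume I ≠ ⊤ := by rw [hIvol]; exact ENNReal.ofReal_ne_top
  have hInt : ∀ (pp : Equiv.Perm (Fin k) × Equiv.Perm (Fin k)) (mn : ℕ × ℕ),
      IntegrableOn (DetDetAux.gterm z η pp mn) I volume := by
    intro pp mn
    exact Measure.integrableOn_of_bounded hIfin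
      (DetDetAux.measurable_gterm z η pp mn).aestronglyMeasurable
      (ae_of_all _ fun x => by
        rw [Real.norm_eq_abs]; exact DetDetAux.abs_gterm_le z η pp mn x)
  have hexp : ∀ (mn : ℕ × ℕ) (x : Fin k → ℝ),
      (1 / (2 * Real.pi) ^ k) *
        Matrix.det (Matrix.of fun s t : Fin k =>
          2 * Real.pi / mn.1 * sn mn.1 (x s - x t)) *
        Matrix.det (Matrix.of fun s t : Fin k =>
          2 * Real.pi / mn.2 *
            sn mn.2 (yfun z η mn.1 mn.2 x s - yfun z η mn.1 mn.2 x t))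
      = ∑ pp : Equiv.Perm (Fin k) × Equiv.Perm (Fin k), DetDetAux.gterm z η pp mn x := by
    intro mn x
    rw [Matrix.det_apply', Matrix.det_apply', Fintype.sum_prod_type]
    rw [mul_assoc, Finset.sum_mul_sum, Finset.mul_sum]
    refine Finset.sum_congr rfl fun σ _ => ?_
    rw [Finset.mul_sum]
    refine Finset.sum_congr rfl fun τ _ => ?_
    simp only [DetDetAux.gterm, Matrix.of_apply]
    ring
  have key : ∀ mn : ℕ × ℕ,
      (∫ x in I,
        (1 / (2 * Real.pi) ^ k) *
          Matrix.det (Matrix.of fun s t : Fin k =>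
            2 * Real.pi / mn.1 * sn mn.1 (x s - x t)) *
          Matrix.det (Matrix.of fun s t : Fin k =>
            2 * Real.pi / mn.2 *
              sn mn.2 (yfun z η mn.1 mn.2 x s - yfun z η mn.1 mn.2 x t)))
      = ∑ pp : Equiv.Perm (Fin k) × Equiv.Perm (Fin k),
          ∫ x in I, DetDetAux.gterm z η pp mn x := by
    intro mn
    rw [integral_congr_ae (ae_of_all _ (hexp mn))]
    exact integral_finset_sum _ fun pp _ => hInt pp mn
  have hfinal : Tendsto (fun mn : ℕ × ℕ =>
      ∑ pp : Equiv.Perm (Fin k) × Equiv.Perm (Fin k), ∫ x in I, DetDetAux.gterm z η pp mn x)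
      (atTop ×ˢ atTop)
      (nhds (∑ pp : Equiv.Perm (Fin k) × Equiv.Perm (Fin k),
        if pp = (1, 1) then (1:ℝ) else 0)) := by
    apply tendsto_finset_sum
    intro pp _
    by_cases hpp : pp = (1, 1)
    · subst hpp
      rw [if_pos rfl]
      have hev : (fun _ : ℕ × ℕ => (1:ℝ)) =ᶠ[atTop ×ˢ atTop]
          fun mn => ∫ x in I, DetDetAux.gterm z η (1, 1) mn x := by
        filter_upwards [(eventually_ge_atTop 1).prod_mk (eventually_ge_atTop 1)] with mn hmn
        have hg : ∀ x : Fin k → ℝ, DetDetAux.gterm z η (1, 1) mn x = 1 / (2 * Real.pi) ^ k := by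
          intro x
          unfold DetDetAux.gterm
          simp only [Equiv.Perm.sign_one, Units.val_one, Int.cast_one, one_mul,
            Equiv.Perm.one_apply, sub_self, Prod.fst, Prod.snd]
          rw [DetDetAux.factor_zero hmn.1, DetDetAux.factor_zero hmn.2]
          simp
        rw [integral_congr_ae (ae_of_all _ hg), setIntegral_const, measureReal_def, hIvol,
          ENNReal.toReal_ofReal (by positivity), smul_eq_mul]
        field_simp
      exact Tendsto.congr' hev tendsto_const_nhds
    · rw [if_neg hpp]
      have h0 : Tendsto (fun mn : ℕ × ℕ => ∫ x in I, DetDetAux.gterm z η pp mn x)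
          (atTop ×ˢ atTop) (nhds (∫ _ in I, (0:ℝ))) := by
        apply tendsto_integral_filter_of_dominated_convergence
          (bound := fun _ => 1 / (2 * Real.pi) ^ k)
        · exact Eventually.of_forall fun mn =>
            (DetDetAux.measurable_gterm z η pp mn).aestronglyMeasurable.restrict
        · exact Eventually.of_forall fun mn => ae_of_all _ fun x => by
            rw [Real.norm_eq_abs]; exact DetDetAux.abs_gterm_le z η pp mn x
        · refine (integrableOn_const_iff).mpr (Or.inr ?_)
          rw [hIvol]; exact ENNReal.ofReal_lt_top
        · have hbad : ∀ᵐ x ∂(volume.restrict I), x ∉ DetDetAux.badSet z η :=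
            ae_restrict_of_ae (measure_eq_zero_iff_ae_notMem.mp (DetDetAux.badSet_null z η))
          exact hbad.mono fun x hx => DetDetAux.gterm_tendsto_zero z η hη pp hpp x hx
      simpa using h0
  have hsumval : (∑ pp : Equiv.Perm (Fin k) × Equiv.Perm (Fin k),
      if pp = (1, 1) then (1:ℝ) else 0) = 1 := by
    rw [Finset.sum_ite_eq' Finset.univ ((1, 1) : Equiv.Perm (Fin k) × Equiv.Perm (Fin k))
      (fun _ => (1:ℝ))]
    simp
  rw [hsumval] at hfinal
  refine hfinal.congr fun mn => ?_
  exact (key mn).symm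
end
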